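/- For every even n ≥ 4, the restricted rotator graph RR_n({2,n}) has no Hamilton cycle; that is, there is no Hamilton sequence for RR_n({2,n}). -/

import Mathlib

open Equiv

/-- The prefix-rotation `σ_r = (1 2 ⋯ r)` of positions, 0-indexed as a
permutation of `Fin n` (it sends position `i` to `i+1` for `i < r-1`,
sends position `r-1` to `0`, and fixes all positions `≥ r`). -/
def sigmaRot (n r : ℕ) : Equiv.Perm (Fin n) :=
  if h : r - 1 < n then Fin.cycleRange ⟨r - 1, h⟩ else 1

/-- The permutation `σ_{r₁}σ_{r₂}⋯σ_{r_i}` (composed left-to-right) given by the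
first `i` entries of the sequence `S`. -/
def partialProd (n : ℕ) (S : List ℕ) (i : ℕ) : Equiv.Perm (Fin n) :=
  ((S.take i).map (sigmaRot n)).prod

/-- `S` is a Hamilton sequence for the restricted rotator graph `RR_n(R)`. -/
def IsHamiltonSeq (n : ℕ) (R : Set ℕ) (S : List ℕ) : Prop :=
  S.length = Nat.factorial n ∧
  (∀ r ∈ S, r ∈ R) ∧
  (∀ i < Nat.factorial n, ∀ j < Nat.factorial n,
      partialProd n S i = partialProd n S j → i = j) ∧
  partialProd n S S.length = 1

/-- The value (0-indexed symbol) at the last position of the string `a`;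
the one-line-notation symbol there is `lastVal a + 1`. -/
def lastVal {n : ℕ} (a : Equiv.Perm (Fin n)) : ℕ :=
  if h : 0 < n then ((a ⟨n - 1, Nat.sub_lt h Nat.one_pos⟩ : Fin n) : ℕ) else 0

/-- Arc relation of the restricted incomplete rotator graph `RIR_n(R,m)`:
both endpoints have last symbol `≤ m` and `b = a·σ_r` for some `r ∈ R`. -/
def RIRAdj (n m : ℕ) (R : Set ℕ) (a b : Equiv.Perm (Fin n)) : Prop :=
  lastVal a < m ∧ lastVal b < m ∧ ∃ r ∈ R, b = a * sigmaRot n r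

/-- `RIR_n(R,m)` is strongly connected. -/
def StronglyConnectedRIR (n m : ℕ) (R : Set ℕ) : Prop :=
  ∀ a b : Equiv.Perm (Fin n), lastVal a < m → lastVal b < m →
    Relation.ReflTransGen (RIRAdj n m R) a b

/-- The reuse operation: replace each entry `r` by `n,…,n,n+1-r` (`n-1` copies of `n`). -/
def reuseOp (n : ℕ) (S : List ℕ) : List ℕ :=
  (S.map (fun r => List.replicate (n - 1) n ++ [n + 1 - r])).flatten

/-- Corbett's reuse sequences: `C₁ = (1)` and `C_k = reuse_k(C_{k-1})`. -/
def corbettC : ℕ → List ℕ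
  | 0 => []
  | 1 => [1]
  | k + 2 => reuseOp (k + 2) (corbettC (k + 1))

/-- The recycle operation: replace each entry `r` by
`n, n, n-1, …, n-1, n, …, n` (`r-1` copies of `n-1`, then `n-r-1` copies of `n`). -/
def recycleOp (n : ℕ) (S : List ℕ) : List ℕ :=
  (S.map (fun r => n :: n :: (List.replicate (r - 1) (n - 1) ++ List.replicate (n - r - 1) n))).flatten

/-- The canonical recycle sequences: `D₁ = (1)` and `D_k = recycle_k(D_{k-1})`. -/
def recycleD : ℕ → List ℕ
  | 0 => []
  | 1 => [1]
  | k + 2 => recycleOp (k + 2) (recycleD (k + 1))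

/-- The rewind operation `rewind_m(S)` (with `S = T, n-1, n-1`):
`(T,n-1,n)`, then `m-2` copies of `(T,n)`, then `(T,n-1,n)`, then `m-2` copies of `n`. -/
def rewindOp (n m : ℕ) (S : List ℕ) : List ℕ :=
  (S.dropLast.dropLast ++ [n - 1, n])
    ++ (List.replicate (m - 2) (S.dropLast.dropLast ++ [n])).flatten
    ++ (S.dropLast.dropLast ++ [n - 1, n])
    ++ List.replicate (m - 2) n

/-- The canonical rewind sequences: `W₂ = (2,2)` and `W_k = rewind_k(W_{k-1})`. -/
def rewindW : ℕ → List ℕ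
  | 0 => []
  | 1 => []
  | 2 => [2, 2]
  | k + 3 => rewindOp (k + 3) (k + 3) (rewindW (k + 2))

/-- `S` is a Hamilton sequence for the restricted incomplete rotator graph `RIR_n(R,m)`,
starting from the string `n n-1 ⋯ 1` (which is `Fin.revPerm`). -/
def IsHamiltonSeqRIR (n m : ℕ) (R : Set ℕ) (S : List ℕ) : Prop :=
  S.length = m * Nat.factorial (n - 1) ∧
  (∀ r ∈ S, r ∈ R) ∧
  (∀ i < S.length, ∀ j < S.length,
      Fin.revPerm * partialProd n S i = Fin.revPerm * partialProd n S j → i = j) ∧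
  {b : Equiv.Perm (Fin n) | ∃ i < S.length, b = Fin.revPerm * partialProd n S i}
    = {b : Equiv.Perm (Fin n) | lastVal b < m} ∧
  Fin.revPerm * partialProd n S S.length = Fin.revPerm

/-- The cyclic shift `shift²` moving the first two entries to the end. -/
def shift2 (S : List ℕ) : List ℕ := S.drop 2 ++ S.take 2

section AuxLemmas

open Equiv Equiv.Perm Subgroup

private lemma mulRight_npow {G : Type*} [Group G] (a : G) (k : ℕ) :
    (Equiv.mulRight a) ^ k = Equiv.mulRight (a ^ k) := by
  induction k with
  | zero => ext x; simp
  | succ k ih =>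
    ext x
    rw [pow_succ, Equiv.Perm.mul_apply, ih]
    simp only [Equiv.coe_mulRight]
    rw [mul_assoc, ← pow_succ']

private lemma mulRight_zpow {G : Type*} [Group G] (a : G) (k : ℤ) :
    (Equiv.mulRight a) ^ k = Equiv.mulRight (a ^ k) := by
  cases k with
  | ofNat m => simpa using mulRight_npow a m
  | negSucc m =>
    rw [zpow_negSucc, zpow_negSucc, mulRight_npow]
    ext x
    simp [Equiv.Perm.inv_def]

/-- Sign of right translation by a generator of a finite cyclic group. -/
private lemma sign_mulRight_gen {K : Type*} [Group K] [Fintype K] [DecidableEq K]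
    (k : K) (hk : k ≠ 1) (hgen : ∀ x : K, x ∈ Subgroup.zpowers k) :
    Equiv.Perm.sign (Equiv.mulRight k) = -(-1) ^ Fintype.card K := by
  have hcyc : (Equiv.mulRight k).IsCycle := by
    refine ⟨1, by simpa using hk, fun y _ => ?_⟩
    obtain ⟨m, hm⟩ := hgen y
    exact ⟨m, by simp [mulRight_zpow, hm]⟩
  have hsupp : (Equiv.mulRight k).support = Finset.univ := by
    rw [Finset.eq_univ_iff_forall]
    intro x
    rw [Equiv.Perm.mem_support]
    simp only [Equiv.coe_mulRight]
    intro h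
    exact hk (by simpa using h)
  have := hcyc.sign
  rwa [hsupp, Finset.card_univ] at this

/-- Cosetwise right-translation permutations and their sign. -/
private lemma sign_cosetwise {G : Type*} [Group G] [Fintype G] [DecidableEq G]
    (H : Subgroup G) [Fintype H] [Fintype (G ⧸ H)] (f : G ⧸ H → H) :
    ∃ π : Equiv.Perm G, (∀ v : G, π v = v * (f (QuotientGroup.mk v) : G)) ∧
      Equiv.Perm.sign π = ∏ q : G ⧸ H, Equiv.Perm.sign (Equiv.mulRight (f q)) := by
  classical
  have hmk : ∀ (q : G ⧸ H) (h : H), QuotientGroup.mk (Quotient.out q * (h : G)) = q := by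
    intro q h
    rw [QuotientGroup.mk_mul_of_mem _ h.2]
    exact QuotientGroup.out_eq' q
  have hbij : Function.Bijective
      (fun p : (G ⧸ H) × H => Quotient.out p.1 * (p.2 : G)) := by
    constructor
    · rintro ⟨q, h⟩ ⟨q', h'⟩ hE
      simp only at hE
      have h1 : q = q' := by
        have := congrArg (QuotientGroup.mk (s := H)) hE
        rwa [hmk, hmk] at this
      subst h1
      have h2 : (h : G) = h' := mul_left_cancel hE
      simp [Subtype.ext h2]
    · intro v
      refine ⟨⟨QuotientGroup.mk v, ⟨(Quotient.out (QuotientGroup.mk v : G ⧸ H))⁻¹ * v, ?_⟩⟩, ?_⟩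
      · exact QuotientGroup.eq.mp (QuotientGroup.out_eq' (QuotientGroup.mk v : G ⧸ H))
      · simp [mul_inv_cancel_left]
  let Fe : (G ⧸ H) × H ≃ G := Equiv.ofBijective _ hbij
  refine ⟨Fe.permCongr (Equiv.prodCongrRight fun q => Equiv.mulRight (f q)), ?_, ?_⟩
  · intro v
    rcases hFe : Fe.symm v with ⟨q0, h0⟩
    have hv : Fe (q0, h0) = v := by rw [← hFe]; exact Fe.apply_symm_apply v
    have hv' : Quotient.out q0 * (h0 : G) = v := hv
    have hq : q0 = QuotientGroup.mk v := by
      have := congrArg (QuotientGroup.mk (s := H)) hv'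
      rwa [hmk] at this
    have : Fe.permCongr (Equiv.prodCongrRight fun q => Equiv.mulRight (f q)) v
        = Fe (q0, h0 * f q0) := by
      rw [Equiv.permCongr_apply, hFe, Equiv.prodCongrRight_apply]
      rfl
    rw [this]
    show Quotient.out q0 * ((h0 * f q0 : H) : G) = v * (f (QuotientGroup.mk v) : G)
    rw [Subgroup.coe_mul, ← mul_assoc, hv', hq]
  · rw [Equiv.Perm.sign_permCongr, Equiv.Perm.sign_prodCongrRight]

end AuxLemmas

/-- Rankin, Swan. For every even `n ≥ 4`, the restricted rotator graph
`RR_n({2,n})` has no Hamilton cycle, i.e. there is no Hamilton sequence for `RR_n({2,n})`. -/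


theorem stmt1 (n : ℕ) (hn : 4 ≤ n) (hEven : Even n) :
    ¬ ∃ S : List ℕ, IsHamiltonSeq n {2, n} S := by
  classical
  obtain ⟨n', rfl⟩ : ∃ m, n = m + 1 := ⟨n - 1, by omega⟩
  have hn' : 3 ≤ n' := by omega
  rintro ⟨S, hlen, hmemS, hinj, hprod⟩
  set a : Equiv.Perm (Fin (n' + 1)) := sigmaRot (n' + 1) 2 with hadef
  set b : Equiv.Perm (Fin (n' + 1)) := sigmaRot (n' + 1) (n' + 1) with hbdef
  have ha : a = Fin.cycleRange ⟨1, by omega⟩ := by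
    rw [hadef]; simp only [sigmaRot]
    rw [dif_pos (show 2 - 1 < n' + 1 by omega)]
  have hb : b = Fin.cycleRange ⟨n', by omega⟩ := by
    rw [hbdef]; simp only [sigmaRot]
    rw [dif_pos (show n' + 1 - 1 < n' + 1 by omega)]
    exact congrArg Fin.cycleRange (Fin.ext (show n' + 1 - 1 = n' by omega))
  clear_value a b
  have ha_apply : ∀ x : Fin (n' + 1),
      ((a x : Fin (n' + 1)) : ℕ)
        = if (x : ℕ) = 0 then 1 else if (x : ℕ) = 1 then 0 else (x : ℕ) := by
    intro x
    have hx := x.isLt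
    rcases Nat.lt_trichotomy (x : ℕ) 1 with h1 | h1 | h1
    · rw [ha, Fin.cycleRange_of_lt (show x < ⟨1, by omega⟩ from h1)]
      rw [Fin.val_add_one_of_lt (show x < Fin.last n' by rw [Fin.lt_def, Fin.val_last]; omega)]
      split_ifs <;> first | omega | exact (‹False›).elim
    · rw [ha, Fin.cycleRange_of_eq (Fin.ext (show (x : ℕ) = 1 from h1))]
      rw [Fin.val_zero]
      split_ifs <;> first | omega | exact (‹False›).elim
    · rw [ha, Fin.cycleRange_of_gt (show (⟨1, by omega⟩ : Fin (n' + 1)) < x from h1)]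
      split_ifs <;> first | omega | exact (‹False›).elim
  have hb_apply : ∀ x : Fin (n' + 1),
      ((b x : Fin (n' + 1)) : ℕ)
        = if (x : ℕ) = n' then 0 else (x : ℕ) + 1 := by
    intro x
    have hx := x.isLt
    rcases Nat.lt_trichotomy (x : ℕ) n' with h1 | h1 | h1
    · rw [hb, Fin.cycleRange_of_lt (show x < ⟨n', by omega⟩ from h1)]
      rw [Fin.val_add_one_of_lt (show x < Fin.last n' by rw [Fin.lt_def, Fin.val_last]; omega)]
      split_ifs <;> first | omega | exact (‹False›).elim
    · rw [hb, Fin.cycleRange_of_eq (Fin.ext (show (x : ℕ) = n' from h1))]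
      rw [Fin.val_zero]
      split_ifs <;> first | omega | exact (‹False›).elim
    · omega
  have haa : a * a = 1 := by
    apply Equiv.ext
    intro x
    have hx := x.isLt
    apply Fin.ext
    rw [Equiv.Perm.mul_apply, Equiv.Perm.one_apply, ha_apply, ha_apply]
    split_ifs <;> first | omega | exact (‹False›).elim
  have hab : a ≠ b := by
    intro h
    have h1 := ha_apply ⟨1, by omega⟩
    rw [h, hb_apply] at h1
    have h2 : ((⟨1, by omega⟩ : Fin (n' + 1)) : ℕ) = 1 := rfl
    rw [h2] at h1
    split_ifs at h1 <;> omega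
  have he_apply : ∀ x : Fin (n' + 1),
      (((a * b : Equiv.Perm (Fin (n' + 1))) x : Fin (n' + 1)) : ℕ)
        = if (x : ℕ) = 0 then 0 else if (x : ℕ) = n' then 1 else (x : ℕ) + 1 := by
    intro x
    have hx := x.isLt
    rw [Equiv.Perm.mul_apply, ha_apply, hb_apply]
    split_ifs <;> first | omega | exact (‹False›).elim
  have hepow : ∀ m, m ≤ n' - 1 → ((((a * b) ^ m) ⟨1, by omega⟩ : Fin (n' + 1)) : ℕ) = 1 + m := by
    intro m
    induction m with
    | zero =>
      intro _
      rw [pow_zero, Equiv.Perm.one_apply]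
    | succ m ih =>
      intro hm
      rw [pow_succ', Equiv.Perm.mul_apply, he_apply, ih (by omega)]
      split_ifs <;> first | omega | exact (‹False›).elim
  have hecyc : (a * b).IsCycle := by
    refine ⟨⟨1, by omega⟩, ?_, ?_⟩
    · intro hc
      have h1 := he_apply ⟨1, by omega⟩
      rw [hc] at h1
      have h2 : ((⟨1, by omega⟩ : Fin (n' + 1)) : ℕ) = 1 := rfl
      rw [h2] at h1
      split_ifs at h1 <;> omega
    · intro y hy
      have hyval : (y : ℕ) ≠ 0 := by
        intro h0
        apply hy
        apply Fin.ext
        rw [he_apply, h0]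
        simp
      have hylt := y.isLt
      refine ⟨(((y : ℕ) - 1 : ℕ) : ℤ), ?_⟩
      apply Fin.ext
      rw [zpow_natCast, hepow ((y : ℕ) - 1) (show (y : ℕ) - 1 ≤ n' - 1 by omega)]
      omega
  have hesupp : (a * b).support = ({(⟨0, by omega⟩ : Fin (n' + 1))}ᶜ : Finset (Fin (n' + 1))) := by
    ext x
    have hx := x.isLt
    simp only [Equiv.Perm.mem_support, Finset.mem_compl, Finset.mem_singleton]
    rw [Ne, Fin.ext_iff, Fin.ext_iff, he_apply]
    have h0 : ((⟨0, by omega⟩ : Fin (n' + 1)) : ℕ) = 0 := rfl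
    rw [h0]
    split_ifs <;> first | omega | exact (‹False›).elim
  have horder_e : orderOf (a * b) = n' := by
    rw [hecyc.orderOf, hesupp, Finset.card_compl, Finset.card_singleton, Fintype.card_fin]
    omega
  have hd_conj : a * (a * b) * a⁻¹ = b * a⁻¹ := by
    rw [← mul_assoc, haa, one_mul]
  have hdpow : (b * a⁻¹) ^ n' = 1 := by
    have he1 : (a * b) ^ n' = 1 := by
      have hh := pow_orderOf_eq_one (a * b)
      rwa [horder_e] at hh
    rw [← hd_conj]
    have hc : a * (a * b) * a⁻¹ = (MulAut.conj a) (a * b) := by rw [MulAut.conj_apply]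
    rw [hc, ← map_pow, he1, map_one]
  have hd1 : (b * a⁻¹ : Equiv.Perm (Fin (n' + 1))) ≠ 1 := by
    intro hcon
    have hba : b = a := by rwa [mul_inv_eq_one] at hcon
    exact hab hba.symm
  have hodd : Odd (orderOf (b * a⁻¹ : Equiv.Perm (Fin (n' + 1)))) := by
    have hdvd : orderOf (b * a⁻¹ : Equiv.Perm (Fin (n' + 1))) ∣ n' := orderOf_dvd_of_pow_eq_one hdpow
    obtain ⟨t, ht⟩ := hEven
    rcases Nat.even_or_odd (orderOf (b * a⁻¹ : Equiv.Perm (Fin (n' + 1)))) with hev | hod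
    · exfalso
      have h2 : 2 ∣ n' := dvd_trans hev.two_dvd hdvd
      obtain ⟨c, hc⟩ := h2
      omega
    · exact hod
  -- the Hamilton sequence machinery
  have hNfac : 2 ∣ Nat.factorial (n' + 1) := Nat.dvd_factorial (by omega) (by omega)
  have h4fac : 4 ∣ Nat.factorial (n' + 1) := Nat.dvd_factorial (by omega) (by omega)
  obtain ⟨M, hM⟩ : ∃ M, Nat.factorial (n' + 1) = M + 1 :=
    ⟨Nat.factorial (n' + 1) - 1, by have := Nat.factorial_pos (n' + 1); omega⟩
  have hModd : Odd M := by
    obtain ⟨t, ht⟩ := hNfac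
    exact ⟨t - 1, by omega⟩
  have hM1 : 1 ≤ M := by
    obtain ⟨t, ht⟩ := hModd
    omega
  have hSlen : S.length = M + 1 := by omega
  have hp0 : partialProd (n' + 1) S 0 = 1 := by simp [partialProd]
  have hpsucc : ∀ i, i < M + 1 → ∀ (hi' : i < S.length), partialProd (n' + 1) S (i + 1)
      = partialProd (n' + 1) S i * sigmaRot (n' + 1) (S.get ⟨i, hi'⟩) := by
    intro i hi hi'
    unfold partialProd
    rw [List.take_succ, List.getElem?_eq_getElem hi', List.map_append, List.prod_append]
    simp
  have hpN : partialProd (n' + 1) S (M + 1) = 1 := by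
    rw [← hM, ← hlen]
    exact hprod
  set p' : Fin (M + 1) → Equiv.Perm (Fin (n' + 1)) :=
    fun i => partialProd (n' + 1) S i.val with hp'def
  have hp'inj : Function.Injective p' := by
    intro i j hij
    exact Fin.ext (hinj i.val (by have := i.isLt; omega) j.val (by have := j.isLt; omega) hij)
  have hp'bij : Function.Bijective p' := by
    refine (Fintype.bijective_iff_injective_and_card p').mpr ⟨hp'inj, ?_⟩
    rw [Fintype.card_fin, Fintype.card_perm, Fintype.card_fin, hM]
  set E : Fin (M + 1) ≃ Equiv.Perm (Fin (n' + 1)) := Equiv.ofBijective p' hp'bij with hEdef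
  have hE : ∀ i : Fin (M + 1), E i = partialProd (n' + 1) S i.val := fun i => rfl
  have hkey : ∀ i : Fin (M + 1),
      E (i + 1) = E i * sigmaRot (n' + 1) (S.get ⟨i.val, by rw [hSlen]; exact i.isLt⟩) := by
    intro i
    have hilt := i.isLt
    have hone : ((1 : Fin (M + 1)) : ℕ) = 1 % (M + 1) := rfl
    rcases Nat.lt_or_ge (i.val + 1) (M + 1) with hlt | hge
    · have hval : ((i + 1 : Fin (M + 1)) : ℕ) = i.val + 1 := by
        rw [Fin.val_add, hone]
        rw [Nat.mod_eq_of_lt (show 1 < M + 1 by omega), Nat.mod_eq_of_lt hlt]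
      rw [hE, hE, hval, hpsucc i.val (by omega) (by omega)]
    · have hiM : i.val = M := by omega
      have hval : ((i + 1 : Fin (M + 1)) : ℕ) = 0 := by
        rw [Fin.val_add, hone]
        rw [Nat.mod_eq_of_lt (show 1 < M + 1 by omega)]
        rw [show (i : ℕ) + 1 = M + 1 from by omega, Nat.mod_self]
      rw [hE, hE, hval, hp0]
      have hlt1 : i.val < M + 1 := i.isLt
      have hlt2 : i.val < S.length := by omega
      rw [← hpsucc i.val hlt1 hlt2]
      rw [show i.val + 1 = M + 1 from by omega, hpN]
  set succ : Equiv.Perm (Equiv.Perm (Fin (n' + 1))) := E.permCongr (finRotate (M + 1))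
    with hsuccdef
  have hsucc_apply : ∀ i : Fin (M + 1), succ (E i) = E (i + 1) := by
    intro i
    rw [hsuccdef, Equiv.permCongr_apply, Equiv.symm_apply_apply, finRotate_succ_apply]
  have hstep : ∀ v, succ v = v * a ∨ succ v = v * b := by
    intro v
    obtain ⟨i, rfl⟩ := E.surjective v
    rw [hsucc_apply, hkey]
    have hmem' := hmemS (S.get ⟨i.val, by rw [hSlen]; exact i.isLt⟩) (List.get_mem _ _)
    simp only [Set.mem_insert_iff, Set.mem_singleton_iff] at hmem'
    rcases hmem' with h2 | hn2
    · left; rw [h2, ← hadef]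
    · right; rw [hn2, ← hbdef]
  set A : Set (Equiv.Perm (Fin (n' + 1))) := {v | succ v = v * a} with hAdef
  have hstep' : ∀ v, v ∉ A → succ v = v * b := by
    intro v hv
    rcases hstep v with h | h
    · exact absurd h hv
    · exact h
  have hdA : ∀ v, v ∉ A → v * (b * a⁻¹) ∉ A := by
    intro v hv hvd
    have h1 : succ (v * (b * a⁻¹)) = v * (b * a⁻¹) * a := hvd
    have h2 : succ v = v * b := hstep' v hv
    have h3 : succ (v * (b * a⁻¹)) = succ v := by
      rw [h1, h2, mul_assoc, inv_mul_cancel_right]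
    have h4 := succ.injective h3
    exact hd1 (mul_left_cancel (a := v) (by rw [mul_one]; exact h4))
  have hdAk : ∀ (k : ℕ), ∀ v, v ∉ A → v * (b * a⁻¹) ^ k ∉ A := by
    intro k
    induction k with
    | zero => intro v hv; simpa using hv
    | succ k ih =>
      intro v hv
      have h5 := hdA _ (ih v hv)
      rw [pow_succ, ← mul_assoc]
      exact h5
  have hfin : IsOfFinOrder (b * a⁻¹ : Equiv.Perm (Fin (n' + 1))) := isOfFinOrder_iff_pow_eq_one.mpr ⟨n', by omega, hdpow⟩
  have hAiff : ∀ v, ∀ z ∈ Subgroup.zpowers (b * a⁻¹ : Equiv.Perm (Fin (n' + 1))), (v ∈ A ↔ v * z ∈ A) := by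
    intro v z hz
    obtain ⟨j, hj⟩ := (Submonoid.mem_powers_iff _ _).mp (hfin.mem_powers_iff_mem_zpowers.mpr hz)
    obtain ⟨j', hj'⟩ := (Submonoid.mem_powers_iff _ _).mp
      (hfin.mem_powers_iff_mem_zpowers.mpr (Subgroup.inv_mem _ hz))
    constructor
    · intro hvA
      by_contra hvz
      have h6 := hdAk j' _ hvz
      rw [hj', mul_inv_cancel_right] at h6
      exact h6 hvA
    · intro hvz
      by_contra hvA
      have h7 := hdAk j v hvA
      rw [hj] at h7
      exact h7 hvz
  set Hd : Subgroup (Equiv.Perm (Fin (n' + 1))) := Subgroup.zpowers (b * a⁻¹) with hHd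
  obtain ⟨ρ, hρ, hρsign⟩ := sign_cosetwise Hd
    (fun q => if Quotient.out q ∈ A then 1 else ⟨b * a⁻¹, Subgroup.mem_zpowers _⟩)
  have hout : ∀ v : Equiv.Perm (Fin (n' + 1)),
      (Quotient.out (QuotientGroup.mk v : _ ⧸ Hd) ∈ A ↔ v ∈ A) := by
    intro v
    have hmemz : (Quotient.out (QuotientGroup.mk v : _ ⧸ Hd))⁻¹ * v ∈ Hd :=
      QuotientGroup.eq.mp (QuotientGroup.out_eq' _)
    have h8 := hAiff (Quotient.out (QuotientGroup.mk v : _ ⧸ Hd)) _ hmemz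
    rwa [mul_inv_cancel_left] at h8
  have hρv : ∀ v, (v ∈ A → ρ v = v) ∧ (v ∉ A → ρ v = v * (b * a⁻¹)) := by
    intro v
    constructor
    · intro hv
      rw [hρ v, if_pos ((hout v).mpr hv)]
      simp
    · intro hv
      rw [hρ v, if_neg (fun h => hv ((hout v).mp h))]
  have hcomp : succ = Equiv.mulRight a * ρ := by
    apply Equiv.ext
    intro v
    rw [Equiv.Perm.mul_apply]
    show succ v = ρ v * a
    by_cases hv : v ∈ A
    · rw [(hρv v).1 hv]
      exact hv
    · rw [(hρv v).2 hv, hstep' v hv, mul_assoc, inv_mul_cancel_right]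
  have hsign_succ : Equiv.Perm.sign succ = -1 := by
    rw [hsuccdef, Equiv.Perm.sign_permCongr, sign_finRotate, Nat.add_sub_cancel, hModd.neg_one_pow]
  have hsign_d : Equiv.Perm.sign (Equiv.mulRight (⟨b * a⁻¹, Subgroup.mem_zpowers _⟩ : Hd)) = 1 := by
    have hne : (⟨b * a⁻¹, Subgroup.mem_zpowers _⟩ : Hd) ≠ 1 := by
      intro hcon
      exact hd1 (congrArg Subtype.val hcon)
    have hgen : ∀ x : Hd, x ∈ Subgroup.zpowers (⟨b * a⁻¹, Subgroup.mem_zpowers _⟩ : Hd) := by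
      intro x
      obtain ⟨k, hk⟩ := Subgroup.mem_zpowers_iff.mp x.2
      exact ⟨k, Subtype.ext (by rw [SubgroupClass.coe_zpow]; exact hk)⟩
    rw [sign_mulRight_gen _ hne hgen]
    have hcard : Fintype.card Hd = orderOf (b * a⁻¹ : Equiv.Perm (Fin (n' + 1))) := by
      rw [← Nat.card_eq_fintype_card]
      exact Nat.card_zpowers _
    rw [hcard, hodd.neg_one_pow]
    decide
  have hsign_ρ : Equiv.Perm.sign ρ = 1 := by
    rw [hρsign]
    apply Finset.prod_eq_one
    intro q _
    by_cases hq : Quotient.out q ∈ A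
    · simp only [if_pos hq]
      have h9 : Equiv.mulRight (1 : Hd) = 1 := by
        apply Equiv.ext; intro x; simp
      rw [h9, map_one]
    · simp only [if_neg hq]
      exact hsign_d
  have horder_a : orderOf a = 2 := by
    apply orderOf_eq_prime
    · rw [pow_two]; exact haa
    · intro hcon
      have h10 := congrArg
        (fun g : Equiv.Perm (Fin (n' + 1)) => ((g ⟨1, by omega⟩ : Fin (n' + 1)) : ℕ)) hcon
      simp only [Equiv.Perm.one_apply] at h10
      rw [ha_apply] at h10
      have h2 : ((⟨1, by omega⟩ : Fin (n' + 1)) : ℕ) = 1 := rfl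
      rw [h2] at h10
      split_ifs at h10 <;> first | omega | exact (‹False›).elim
  set Ha : Subgroup (Equiv.Perm (Fin (n' + 1))) := Subgroup.zpowers a with hHa
  obtain ⟨π, hπ, hπsign⟩ := sign_cosetwise Ha (fun _ => ⟨a, Subgroup.mem_zpowers a⟩)
  have hπ_eq : π = Equiv.mulRight a := by
    apply Equiv.ext
    intro v
    rw [hπ v, Equiv.coe_mulRight]
  have hsign_a_gen :
      Equiv.Perm.sign (Equiv.mulRight (⟨a, Subgroup.mem_zpowers a⟩ : Ha)) = -1 := by
    have hne : (⟨a, Subgroup.mem_zpowers a⟩ : Ha) ≠ 1 := by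
      intro hcon
      have h12 : a = 1 := congrArg Subtype.val hcon
      rw [h12] at horder_a
      simp at horder_a
    have hgen : ∀ x : Ha, x ∈ Subgroup.zpowers (⟨a, Subgroup.mem_zpowers a⟩ : Ha) := by
      intro x
      obtain ⟨k, hk⟩ := Subgroup.mem_zpowers_iff.mp x.2
      exact ⟨k, Subtype.ext (by rw [SubgroupClass.coe_zpow]; exact hk)⟩
    rw [sign_mulRight_gen _ hne hgen]
    have hcard : Fintype.card Ha = 2 := by
      rw [← Nat.card_eq_fintype_card]
      rw [show Nat.card Ha = orderOf a from Nat.card_zpowers a, horder_a]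
    rw [hcard]
    decide
  have hcard_even : Even (Fintype.card (Equiv.Perm (Fin (n' + 1)) ⧸ Ha)) := by
    have h1 : Nat.card (Equiv.Perm (Fin (n' + 1)))
        = Nat.card (Equiv.Perm (Fin (n' + 1)) ⧸ Ha) * Nat.card Ha :=
      Subgroup.card_eq_card_quotient_mul_card_subgroup Ha
    have h2 : Nat.card Ha = 2 := by rw [show Nat.card Ha = orderOf a from Nat.card_zpowers a, horder_a]
    have h3 : Nat.card (Equiv.Perm (Fin (n' + 1))) = Nat.factorial (n' + 1) := by
      rw [Nat.card_eq_fintype_card, Fintype.card_perm, Fintype.card_fin]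
    rw [h2, h3, Nat.card_eq_fintype_card] at h1
    rw [Nat.even_iff]
    omega
  have hsign_mra : Equiv.Perm.sign (Equiv.mulRight a) = 1 := by
    rw [← hπ_eq, hπsign]
    have h11 : ∀ q ∈ (Finset.univ : Finset (Equiv.Perm (Fin (n' + 1)) ⧸ Ha)),
        Equiv.Perm.sign (Equiv.mulRight
          ((fun _ => (⟨a, Subgroup.mem_zpowers a⟩ : Ha)) q)) = -1 :=
      fun q _ => hsign_a_gen
    rw [Finset.prod_congr rfl h11, Finset.prod_const, Finset.card_univ,
      hcard_even.neg_one_pow]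
  have hfinal : (-1 : ℤˣ) = 1 := by
    rw [← hsign_succ, hcomp, map_mul, hsign_mra, hsign_ρ, one_mul]
  exact absurd hfinal (by decide)
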